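/- Suppose λ_I = 0 (so λ = λ_R + λ_S) and define f(x) = λ_R/λ + α_S·Σ_s Σ_d (d·μ_{s,d}/λ)(x + (1-x)e^{-β_s})^{d-1} and R_0 = (α_S/λ)·Σ_s (1 - e^{-β_s})·Σ_d d(d-1)·μ_{s,d}. If R_0 < 1, then f(x) > x for all x ∈ [0,1), and f(1) = 1. -/
import Mathlib


theorem stmt_4 {S : Type*} [Fintype S]
    (β : S → ℝ) (μ : S → ℕ → ℝ) (lamS lamR alphaS : ℝ)
    (hβ : ∀ s, 0 < β s) (hμ : ∀ s d, 0 ≤ μ s d)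
    (hlamS : 0 < lamS) (hlamR : 0 ≤ lamR)
    (hαS : alphaS ∈ Set.Ioc (0:ℝ) 1)
    (hsummable : ∀ s, Summable fun d : ℕ => (d:ℝ) * μ s d)
    (hsummable2 : ∀ s, Summable fun d : ℕ => (d:ℝ) * ((d:ℝ) - 1) * μ s d)
    (hsum : alphaS * ∑ s, ∑' d : ℕ, (d:ℝ) * μ s d = lamS)
    (lam : ℝ) (hlam : lam = lamR + lamS)
    (f : ℝ → ℝ)
    (hf : ∀ x, f x = lamR / lam + alphaS * ∑ s, ∑' d : ℕ,
      ((d:ℝ) * μ s d / lam) * (x + (1-x) * Real.exp (-β s)) ^ (d-1))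
    (R0 : ℝ)
    (hR0 : R0 = (alphaS / lam) * ∑ s, (1 - Real.exp (-β s)) *
      ∑' d : ℕ, (d:ℝ) * ((d:ℝ) - 1) * μ s d)
    (hR0lt : R0 < 1) :
    (∀ x ∈ Set.Ico (0:ℝ) 1, x < f x) ∧ f 1 = 1 := by
  obtain ⟨hα0, hα1⟩ := hαS
  have hlam0 : 0 < lam := by rw [hlam]; linarith
  constructor
  · intro x hx
    obtain ⟨hx0, hx1⟩ := hx
    -- per-site value y s
    set y : S → ℝ := fun s => x + (1-x) * Real.exp (-β s) with hy
    have hy0 : ∀ s, 0 ≤ y s := fun s => by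
      have h := (Real.exp_pos (-β s)).le
      show 0 ≤ x + (1-x) * Real.exp (-β s)
      nlinarith
    have hy1 : ∀ s, y s ≤ 1 := fun s => by
      have h1 : Real.exp (-β s) ≤ 1 := by
        apply Real.exp_le_one_iff.mpr; linarith [hβ s]
      show x + (1-x) * Real.exp (-β s) ≤ 1
      nlinarith
    -- key per-s lower bound on the inner tsum
    have key : ∀ s, (∑' d : ℕ, (d:ℝ) * μ s d) / lam
        + (y s - 1) * ((∑' d : ℕ, (d:ℝ) * ((d:ℝ) - 1) * μ s d) / lam)
        ≤ ∑' d : ℕ, ((d:ℝ) * μ s d / lam) * (y s) ^ (d-1) := by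
      intro s
      have S1 : Summable (fun d : ℕ => (d:ℝ) * μ s d / lam) :=
        (hsummable s).div_const lam
      have S2 : Summable (fun d : ℕ => (y s - 1) * ((d:ℝ) * ((d:ℝ) - 1) * μ s d / lam)) :=
        ((hsummable2 s).div_const lam).mul_left _
      have S3 : Summable (fun d : ℕ => ((d:ℝ) * μ s d / lam) * (y s) ^ (d-1)) := by
        refine Summable.of_nonneg_of_le ?_ ?_ S1
        · intro d
          apply mul_nonneg
          · exact div_nonneg (mul_nonneg (Nat.cast_nonneg d) (hμ s d)) hlam0.le
          · exact pow_nonneg (hy0 s) _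
        · intro d
          have h1 : (y s) ^ (d-1) ≤ 1 := pow_le_one₀ (hy0 s) (hy1 s)
          have h2 : 0 ≤ (d:ℝ) * μ s d / lam :=
            div_nonneg (mul_nonneg (Nat.cast_nonneg d) (hμ s d)) hlam0.le
          nlinarith
      have hterm : ∀ d : ℕ, (d:ℝ) * μ s d / lam
          + (y s - 1) * ((d:ℝ) * ((d:ℝ) - 1) * μ s d / lam)
          ≤ ((d:ℝ) * μ s d / lam) * (y s) ^ (d-1) := by
        intro d
        match d with
        | 0 => simp
        | (n+1) =>
          have hbern : 1 + (n:ℝ) * (y s - 1) ≤ (1 + (y s - 1)) ^ n :=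
            one_add_mul_le_pow (by linarith [hy0 s]) n
          have hybn : 1 + (n:ℝ) * (y s - 1) ≤ (y s) ^ n := by
            convert hbern using 2; ring
          have hc : 0 ≤ ((n+1:ℕ):ℝ) * μ s (n+1) / lam :=
            div_nonneg (mul_nonneg (Nat.cast_nonneg _) (hμ s _)) hlam0.le
          have := mul_le_mul_of_nonneg_left hybn hc
          calc ((n+1:ℕ):ℝ) * μ s (n+1) / lam
                + (y s - 1) * (((n+1:ℕ):ℝ) * (((n+1:ℕ):ℝ) - 1) * μ s (n+1) / lam)
              = (((n+1:ℕ):ℝ) * μ s (n+1) / lam) * (1 + (n:ℝ) * (y s - 1)) := by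
                push_cast; ring
            _ ≤ (((n+1:ℕ):ℝ) * μ s (n+1) / lam) * (y s) ^ n := this
            _ = (((n+1:ℕ):ℝ) * μ s (n+1) / lam) * (y s) ^ (n+1-1) := by norm_num
      calc (∑' d : ℕ, (d:ℝ) * μ s d) / lam
            + (y s - 1) * ((∑' d : ℕ, (d:ℝ) * ((d:ℝ) - 1) * μ s d) / lam)
          = ∑' d : ℕ, ((d:ℝ) * μ s d / lam
              + (y s - 1) * ((d:ℝ) * ((d:ℝ) - 1) * μ s d / lam)) := by
            rw [Summable.tsum_add S1 S2, tsum_mul_left, tsum_div_const, tsum_div_const]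
        _ ≤ _ := Summable.tsum_le_tsum hterm (S1.add S2) S3
    -- sum the bound over s
    have hsumkey : ∑ s, ((∑' d : ℕ, (d:ℝ) * μ s d) / lam
        + (y s - 1) * ((∑' d : ℕ, (d:ℝ) * ((d:ℝ) - 1) * μ s d) / lam))
        ≤ ∑ s, ∑' d : ℕ, ((d:ℝ) * μ s d / lam) * (y s) ^ (d-1) :=
      Finset.sum_le_sum (fun s _ => key s)
    -- identify the LHS sum
    have hLHS : alphaS * ∑ s, ((∑' d : ℕ, (d:ℝ) * μ s d) / lam
        + (y s - 1) * ((∑' d : ℕ, (d:ℝ) * ((d:ℝ) - 1) * μ s d) / lam))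
        = lamS / lam - (1-x) * R0 := by
      have hys : ∀ s, y s - 1 = -((1-x) * (1 - Real.exp (-β s))) := fun s => by
        simp only [hy]; ring
      have expand : ∀ s : S, (∑' d : ℕ, (d:ℝ) * μ s d) / lam
          + (y s - 1) * ((∑' d : ℕ, (d:ℝ) * ((d:ℝ) - 1) * μ s d) / lam)
          = ((∑' d : ℕ, (d:ℝ) * μ s d)
              - (1-x) * ((1 - Real.exp (-β s)) *
                ∑' d : ℕ, (d:ℝ) * ((d:ℝ) - 1) * μ s d)) / lam := by
        intro s
        rw [hys s]; ring
      rw [Finset.sum_congr rfl (fun s _ => expand s), ← Finset.sum_div,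
        Finset.sum_sub_distrib, ← Finset.mul_sum, sub_div, hR0]
      field_simp
      rw [← hsum]
      ring
    -- conclude
    have hfx : f x = lamR / lam + alphaS * ∑ s, ∑' d : ℕ,
        ((d:ℝ) * μ s d / lam) * (y s) ^ (d-1) := hf x
    have hge : lamR / lam + (lamS / lam - (1-x) * R0) ≤ f x := by
      rw [hfx, ← hLHS]
      have := mul_le_mul_of_nonneg_left hsumkey (le_of_lt hα0)
      linarith
    have h1 : lamR / lam + lamS / lam = 1 := by
      field_simp; linarith
    have h2 : (1-x) * R0 < (1-x) * 1 :=
      mul_lt_mul_of_pos_left hR0lt (by linarith)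
    linarith
  · rw [hf 1]
    have : ∀ s, ∑' d : ℕ, ((d:ℝ) * μ s d / lam) * ((1:ℝ) + (1-1) * Real.exp (-β s)) ^ (d-1)
        = (∑' d : ℕ, (d:ℝ) * μ s d) / lam := by
      intro s
      simp [tsum_div_const]
    rw [Finset.sum_congr rfl (fun s _ => this s), ← Finset.sum_div]
    have h2 : alphaS * ((∑ s, ∑' d : ℕ, (d:ℝ) * μ s d) / lam) = lamS / lam := by
      rw [← hsum]; ring
    rw [h2]
    field_simp
    linarith
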